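/- (Discrete Noether theorem / conservation of the discrete momentum map.) Let L_d : E × E → ℝ be differentiable and let A : E →L[ℝ] E satisfy L_d(exp(tA) q0, exp(tA) q1) = L_d(q0,q1) for all t ∈ ℝ and all q0, q1 ∈ E. If (q0,q1,q2) satisfies the discrete Euler–Lagrange equation D₂L_d(q0,q1) + D₁L_d(q1,q2) = 0 (as an element of E →L[ℝ] ℝ), then the discrete momentum is conserved: D₂L_d(q0,q1)(A q1) = D₂L_d(q1,q2)(A q2). -/

import Mathlib

open ContinuousLinearMap

variable {E : Type*} [NormedAddCommGroup E] [NormedSpace ℝ E] [FiniteDimensional ℝ E]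

/-- Partial Fréchet derivative in the first variable. -/
noncomputable def D1 (L : E × E → ℝ) (x : E × E) : E →L[ℝ] ℝ :=
  fderiv ℝ (fun a => L (a, x.2)) x.1

/-- Partial Fréchet derivative in the second variable. -/
noncomputable def D2 (L : E × E → ℝ) (x : E × E) : E →L[ℝ] ℝ :=
  fderiv ℝ (fun b => L (x.1, b)) x.2

lemma infinitesimal_inv (Ld : E × E → ℝ) (hLd : Differentiable ℝ Ld) (A : E →L[ℝ] E)
    (hinv : ∀ (t : ℝ) (q0 q1 : E),
      Ld (NormedSpace.exp (t • A) q0, NormedSpace.exp (t • A) q1) = Ld (q0, q1))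
    (a b : E) : D1 Ld (a, b) (A a) + D2 Ld (a, b) (A b) = 0 := by
  -- derivative of t ↦ exp(tA) applied to a point
  have hexp : ∀ x : E, HasDerivAt (fun t : ℝ => NormedSpace.exp (t • A) x) (A x) 0 := by
    intro x
    have h := hasDerivAt_exp_smul_const (𝕂 := ℝ) A (0 : ℝ)
    have h2 := ((ContinuousLinearMap.apply ℝ E x).hasFDerivAt.comp_hasDerivAt 0 h)
    simpa [Function.comp_def] using h2
  have hpair : HasDerivAt
      (fun t : ℝ => ((NormedSpace.exp (t • A) a, NormedSpace.exp (t • A) b) : E × E))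
      ((A a, A b)) 0 := (hexp a).prodMk (hexp b)
  have hcomp : HasDerivAt
      (fun t : ℝ => Ld (NormedSpace.exp (t • A) a, NormedSpace.exp (t • A) b))
      (fderiv ℝ Ld (a, b) (A a, A b)) 0 := by
    have h0 : ((NormedSpace.exp ((0:ℝ) • A) a, NormedSpace.exp ((0:ℝ) • A) b) : E × E)
        = (a, b) := by simp
    have := ((hLd _).hasFDerivAt.comp_hasDerivAt 0 hpair)
    rwa [h0] at this
  have hconst : HasDerivAt
      (fun t : ℝ => Ld (NormedSpace.exp (t • A) a, NormedSpace.exp (t • A) b))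
      0 0 := by
    have : (fun t : ℝ => Ld (NormedSpace.exp (t • A) a, NormedSpace.exp (t • A) b))
        = fun _ => Ld (a, b) := funext fun t => hinv t a b
    rw [this]; exact hasDerivAt_const _ _
  have hzero : fderiv ℝ Ld (a, b) (A a, A b) = 0 := hcomp.unique hconst
  have hD1 : D1 Ld (a, b) = (fderiv ℝ Ld (a, b)).comp (inl ℝ E E) :=
    ((hLd (a, b)).hasFDerivAt.comp a (hasFDerivAt_prodMk_left a b)).fderiv
  have hD2 : D2 Ld (a, b) = (fderiv ℝ Ld (a, b)).comp (inr ℝ E E) :=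
    ((hLd (a, b)).hasFDerivAt.comp b (hasFDerivAt_prodMk_right a b)).fderiv
  have : ((A a, A b) : E × E) = (A a, 0) + (0, A b) := by simp
  rw [hD1, hD2]
  simp only [ContinuousLinearMap.comp_apply, inl_apply, inr_apply]
  rw [← map_add, ← this, hzero]

/-- **Discrete Noether theorem: conservation of the discrete momentum map.**
If `L_d` is invariant under the one-parameter group `exp(tA)` and `(q0,q1,q2)` satisfies
the discrete Euler–Lagrange equation, then the discrete momentum is conserved. -/
theorem discrete_noether
    (Ld : E × E → ℝ) (hLd : Differentiable ℝ Ld) (A : E →L[ℝ] E)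
    (hinv : ∀ (t : ℝ) (q0 q1 : E),
      Ld (NormedSpace.exp (t • A) q0, NormedSpace.exp (t • A) q1) = Ld (q0, q1))
    (q0 q1 q2 : E)
    (hDEL : D2 Ld (q0, q1) + D1 Ld (q1, q2) = 0) :
    D2 Ld (q0, q1) (A q1) = D2 Ld (q1, q2) (A q2) := by
  have h1 := infinitesimal_inv Ld hLd A hinv q1 q2
  have h2 : D2 Ld (q0, q1) (A q1) + D1 Ld (q1, q2) (A q1) = 0 := by
    have := congrArg (fun f : E →L[ℝ] ℝ => f (A q1)) hDEL
    simpa using this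
  linarith
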